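/- There exists a topological subset model and an epistemic scenario at which int(p) → K(p → int(p)) fails. -/
import Mathlib

/-- Formulas of the public announcement language PAL (with the `int` modality). -/
inductive Form : Type
  | atom : ℕ → Form
  | neg : Form → Form
  | and : Form → Form → Form
  | K : Form → Form
  | int : Form → Form
  | ann : Form → Form → Form

/-- Material implication, defined classically. -/
def Form.imp (φ ψ : Form) : Form := .neg (.and φ (.neg ψ))

/-- Int-semantics for PAL on a topological subset model with valuation `v`. -/
def sat {α : Type*} [TopologicalSpace α] (v : ℕ → Set α) : Form → α → Set α → Prop
  | .atom n, x, _ => x ∈ v n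
  | .neg φ, x, U => ¬ sat v φ x U
  | .and φ ψ, x, U => sat v φ x U ∧ sat v ψ x U
  | .K φ, x, U => ∀ y ∈ U, sat v φ y U
  | .int φ, x, U => x ∈ interior {y ∈ U | sat v φ y U}
  | .ann φ ψ, x, U =>
      x ∈ interior {y ∈ U | sat v φ y U} → sat v ψ x (interior {y ∈ U | sat v φ y U})

/-- There is a topological subset model and an epistemic scenario at which the
scheme `int(p) → K(p → int(p))` fails. -/
theorem int_to_K_fails :
    ∃ (α : Type) (_ : TopologicalSpace α) (v : ℕ → Set α) (x : α) (U : Set α),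
      x ∈ U ∧ IsOpen U ∧
      ¬ sat v ((Form.int (.atom 0)).imp (.K ((Form.atom 0).imp (.int (.atom 0))))) x U := by
  refine ⟨ℝ, inferInstance, fun _ => Set.Iio 0 ∪ {1}, -1, Set.univ, trivial, isOpen_univ, ?_⟩
  have hS : {y ∈ (Set.univ : Set ℝ) |
      sat (fun _ => Set.Iio 0 ∪ {1}) (.atom 0) y Set.univ} = Set.Iio 0 ∪ {1} := by
    ext y; simp [sat]
  have h1 : Set.Iio (0:ℝ) ⊆ interior (Set.Iio 0 ∪ {1}) :=
    interior_maximal Set.subset_union_left isOpen_Iio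
  have h2 : (1:ℝ) ∉ interior (Set.Iio 0 ∪ {1}) := by
    intro h
    rw [mem_interior_iff_mem_nhds, Metric.mem_nhds_iff] at h
    obtain ⟨ε, hε, hball⟩ := h
    have hmem : 1 + ε/2 ∈ Metric.ball (1:ℝ) ε := by
      rw [Metric.mem_ball, Real.dist_eq]
      rw [abs_of_pos (by linarith)]
      linarith
    have := hball hmem
    rcases this with h | h
    · simp at h; linarith
    · simp at h; linarith
  simp only [Form.imp, sat, hS, not_forall, not_not, Set.mem_univ, true_and, not_exists]
  refine ⟨h1 (by norm_num), 1, trivial, ?_⟩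
  have hS' : {y : ℝ | y = 1 ∨ y < 0} = Set.Iio 0 ∪ {1} := by
    ext y; simp [or_comm]
  simp [sat, hS]
  rw [hS']
  exact h2
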